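/- (Theorem 1, lower bound, continuous allocations.) Assume the continuous MPSP setting. Suppose (C*, n*) is an equal-finish point. Then every feasible continuous allocation with makespan C satisfies C ≥ C*. -/

import Mathlib

open MeasureTheory

/-- A feasible continuous allocation for the continuous MPSP setting:
`a m` is the (time-varying) device allocation of project `m` on `[0, C]`;
allocations are nonnegative, respect the capacity `N` at every time,
are integrable together with the resulting speeds, and complete
the workload `L m` of every project within the makespan `C`. -/
def FeasibleAlloc {M : Type*} [Fintype M] (L : M → ℝ) (f : M → ℝ → ℝ) (N : ℝ)
    (a : M → ℝ → ℝ) (C : ℝ) : Prop :=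
  0 < C ∧
  (∀ m, ∀ t ∈ Set.Icc (0 : ℝ) C, 0 ≤ a m t) ∧
  (∀ t ∈ Set.Icc (0 : ℝ) C, ∑ m, a m t ≤ N) ∧
  (∀ m, IntegrableOn (a m) (Set.Icc 0 C)) ∧
  (∀ m, IntegrableOn (fun t => f m (a m t)) (Set.Icc 0 C)) ∧
  (∀ m, L m ≤ ∫ t in Set.Icc (0 : ℝ) C, f m (a m t))

/-- A concave nonnegative function on `[0, ∞)` is monotone there. -/
lemma concave_nonneg_mono {g : ℝ → ℝ} (hc : ConcaveOn ℝ (Set.Ici 0) g)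
    (hnn : ∀ x : ℝ, 0 ≤ x → 0 ≤ g x) {x y : ℝ} (hx : 0 ≤ x) (hxy : x ≤ y) :
    g x ≤ g y := by
  rcases eq_or_lt_of_le hxy with rfl | hlt
  · exact le_rfl
  refine le_of_forall_pos_le_add fun ε hε => ?_
  set k : ℝ := max 1 ((g x + 1) / ε) with hk
  have hk1 : (1 : ℝ) ≤ k := le_max_left _ _
  have hkpos : (0 : ℝ) < k := lt_of_lt_of_le one_pos hk1
  set z : ℝ := x + (y - x) * k with hz
  have hyz : y ≤ z := by nlinarith
  have hz0 : (0 : ℝ) ≤ z := le_trans (le_trans hx hxy) hyz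
  have hb0 : (0 : ℝ) ≤ 1 / k := by positivity
  have ha0 : (0 : ℝ) ≤ 1 - 1 / k := by
    have : 1 / k ≤ 1 := by
      rw [div_le_one hkpos]; exact hk1
    linarith
  have hcomb : (1 - 1 / k) • x + (1 / k) • z = y := by
    field_simp [hz]
    linear_combination k⁻¹ * hz + y * mul_inv_cancel₀ hkpos.ne'
  have hconc := hc.2 (Set.mem_Ici.mpr hx) (Set.mem_Ici.mpr hz0) ha0 hb0 (by ring)
  rw [hcomb] at hconc
  have hgz : 0 ≤ g z := hnn z hz0
  -- g y ≥ (1 - 1/k) g x, and (1/k) * g x ≤ ε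
  have hgx : 0 ≤ g x := hnn x hx
  have hkge : (g x + 1) / ε ≤ k := le_max_right _ _
  have hgk : (1 / k) * g x ≤ ε := by
    rw [div_mul_eq_mul_div, div_le_iff₀ hkpos]
    have := (div_le_iff₀ hε).mp hkge
    nlinarith
  have : (1 - 1 / k) * g x ≤ g y := by
    have := smul_le_smul_of_nonneg_left hgz hb0
    simp only [smul_eq_mul] at hconc
    nlinarith
  nlinarith

/-- Theorem 1 (lower bound, continuous allocations): if `(Cstar, nstar)` is an
equal-finish point, then every feasible continuous allocation with makespan `C`
satisfies `C ≥ Cstar`. -/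
theorem mpsp_lower_bound {M : Type*} [Fintype M] [Nonempty M]
    (L : M → ℝ) (hL : ∀ m, 0 < L m)
    (f : M → ℝ → ℝ)
    (hconc : ∀ m, ConcaveOn ℝ (Set.Ici 0) (f m))
    (hcont : ∀ m, ContinuousOn (f m) (Set.Ici 0))
    (hnonneg : ∀ m, ∀ x : ℝ, 0 ≤ x → 0 ≤ f m x)
    (hzero : ∀ m, f m 0 = 0)
    (N : ℝ) (hN : 0 < N)
    (Cstar : ℝ) (nstar : M → ℝ) (hCstar : 0 < Cstar)
    (hnstar_nonneg : ∀ m, 0 ≤ nstar m)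
    (hfinish : ∀ m, f m (nstar m) * Cstar = L m)
    (hsum : ∑ m, nstar m = N)
    (a : M → ℝ → ℝ) (C : ℝ)
    (hfeas : FeasibleAlloc L f N a C) :
    Cstar ≤ C := by
  obtain ⟨hC, hpos, hcap, hint_a, hint_f, hwork⟩ := hfeas
  by_contra hcon
  push_neg at hcon
  set μ : Measure ℝ := volume.restrict (Set.Icc (0 : ℝ) C) with hμ
  haveI : IsFiniteMeasure μ := by
    refine ⟨?_⟩
    rw [hμ, Measure.restrict_apply_univ, Real.volume_Icc]
    exact ENNReal.ofReal_lt_top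
  have hμuniv : (μ Set.univ).toReal = C := by
    rw [hμ, Measure.restrict_apply_univ, Real.volume_Icc, sub_zero,
      ENNReal.toReal_ofReal hC.le]
  haveI : NeZero μ := by
    refine ⟨fun h => ?_⟩
    have : (μ Set.univ).toReal = 0 := by rw [h]; simp
    rw [hμuniv] at this
    exact hC.ne' this
  set abar : M → ℝ := fun m => ⨍ t, a m t ∂μ with habar
  have hmem : ∀ m, ∀ᵐ t ∂μ, a m t ∈ Set.Ici (0 : ℝ) := fun m =>
    ae_restrict_of_forall_mem measurableSet_Icc (fun t ht => hpos m t ht)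
  have habar_nonneg : ∀ m, 0 ≤ abar m := fun m => by
    rw [habar]
    simp only
    rw [average_eq, smul_eq_mul]
    have : 0 ≤ ∫ t, a m t ∂μ := integral_nonneg_of_ae (hmem m)
    positivity
  -- Jensen
  have hjensen : ∀ m, (⨍ t, f m (a m t) ∂μ) ≤ f m (abar m) := fun m =>
    (hconc m).le_map_average (hcont m) isClosed_Ici (hmem m) (hint_a m) (hint_f m)
  -- average capacity
  have hsum_abar : ∑ m, abar m ≤ N := by
    have hint : (∫ t, ∑ m, a m t ∂μ) ≤ N * C := by
      have h1 : (∫ t, ∑ m, a m t ∂μ) ≤ ∫ _t, N ∂μ :=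
        integral_mono_ae (integrable_finset_sum _ fun m _ => hint_a m)
          (integrable_const _)
          (ae_restrict_of_forall_mem measurableSet_Icc fun t ht => hcap t ht)
      have h2 : (∫ _t : ℝ, N ∂μ) = N * C := by
        rw [integral_const, measureReal_def, hμuniv, smul_eq_mul, mul_comm]
      linarith
    have hsum' : ∑ m, abar m = (μ Set.univ).toReal⁻¹ * ∫ t, ∑ m, a m t ∂μ := by
      simp only [habar, average_eq, smul_eq_mul]
      rw [← Finset.mul_sum, integral_finset_sum _ (fun m _ => hint_a m)]
      rfl
    rw [hsum', hμuniv]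
    calc C⁻¹ * ∫ t, ∑ m, a m t ∂μ ≤ C⁻¹ * (N * C) :=
          mul_le_mul_of_nonneg_left hint (by positivity)
      _ = N := by field_simp
  -- pigeonhole
  obtain ⟨m, hm⟩ : ∃ m, abar m ≤ nstar m := by
    by_contra hno
    push_neg at hno
    have := Finset.sum_lt_sum_of_nonempty Finset.univ_nonempty
      (fun m _ => hno m)
    rw [hsum] at this
    linarith
  -- chain of inequalities
  have h1 : f m (nstar m) = L m / Cstar := by
    field_simp [← hfinish m]
    exact hfinish m
  have h2 : L m / Cstar < L m / C :=
    div_lt_div_of_pos_left (hL m) hC hcon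
  have h3 : L m / C ≤ ⨍ t, f m (a m t) ∂μ := by
    rw [average_eq, measureReal_def, hμuniv, smul_eq_mul, div_le_iff₀ hC]
    calc L m ≤ ∫ t in Set.Icc (0 : ℝ) C, f m (a m t) := hwork m
      _ = C⁻¹ * (∫ t, f m (a m t) ∂μ) * C := by
          rw [hμ]; field_simp
  have h5 : f m (abar m) ≤ f m (nstar m) :=
    concave_nonneg_mono (hconc m) (hnonneg m) (habar_nonneg m) hm
  linarith [hjensen m]
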